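/- There is a constant C, depending only on n, d, K, φ_ℝ and Lip(A), such that for every f ∈ L¹(μ), every x ∈ Γ and every ε > 0, |T^μ_ε f(x) − T^μ_{φ_ε} f(x)| ≤ C M^μ f(x), where T^μ_ε f(x) := ∫_{|x−y|>ε} K(x−y) f(y) dμ(y). In particular |T^μ_ε f(x)| ≤ T^μ_{φ_ε*} f(x) + C M^μ f(x), where T^μ_{φ_ε*} f(x) := sup_{δ>0} |T^μ_{φ_δ} f(x)|. -/

import Mathlib

open MeasureTheory Set Filter ENNReal NNReal

noncomputable section

/-- Euclidean space `ℝ^k`. -/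
abbrev Euc (k : ℕ) : Type := EuclideanSpace ℝ (Fin k)

/-- Projection `x ↦ x̃` onto the first `n` coordinates. -/
def projn (n d : ℕ) (h : n ≤ d) (x : Euc d) : Euc n := WithLp.toLp 2 (fun i => x (Fin.castLE h i))

/-- An odd Calderón–Zygmund kernel of homogeneity `-n` on `ℝ^d`, with constant `CK`. -/
structure IsCZKernel (n d : ℕ) (CK : ℝ) (K : Euc d → ℝ) : Prop where
  pos : 0 < CK
  odd : ∀ x : Euc d, K (-x) = -K x
  diff : ∀ x : Euc d, x ≠ 0 → DifferentiableAt ℝ K x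
  diff2 : ∀ x : Euc d, x ≠ 0 → DifferentiableAt ℝ (fderiv ℝ K) x
  bound : ∀ x : Euc d, x ≠ 0 → |K x| ≤ CK / ‖x‖ ^ n
  fderiv_bound : ∀ x : Euc d, x ≠ 0 → ‖fderiv ℝ K x‖ ≤ CK / ‖x‖ ^ (n + 1)
  fderiv2_bound : ∀ x : Euc d, x ≠ 0 → ‖fderiv ℝ (fderiv ℝ K) x‖ ≤ CK / ‖x‖ ^ (n + 2)

/-- The smooth truncation profile `φ_ℝ`: a nondecreasing `C²` function with
`χ_{[3√n,∞)} ≤ φ_ℝ ≤ χ_{[2.1√n,∞)}` (extended by `0` to all of `ℝ`). -/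
structure IsCutoff (n : ℕ) (φR : ℝ → ℝ) : Prop where
  mono : Monotone φR
  smooth : ContDiff ℝ 2 φR
  nonneg : ∀ t : ℝ, 0 ≤ φR t
  le_one : ∀ t : ℝ, φR t ≤ 1
  eq_zero : ∀ t : ℝ, t < 2.1 * Real.sqrt n → φR t = 0
  eq_one : ∀ t : ℝ, 3 * Real.sqrt n ≤ t → φR t = 1

/-- `φ_ε(x) = φ_ℝ(|x̃|/ε)`. -/
def phiE (n d : ℕ) (h : n ≤ d) (φR : ℝ → ℝ) (ε : ℝ) (x : Euc d) : ℝ :=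
  φR (‖projn n d h x‖ / ε)

/-- The map `u ↦ (u, A u)` from `ℝⁿ` to `ℝ^d`. -/
def graphMap (n d : ℕ) (h : n ≤ d) (A : Euc n → Euc (d - n)) (u : Euc n) : Euc d :=
  WithLp.toLp 2 (fun i => if hi : (i : ℕ) < n then u ⟨i, hi⟩
           else A u ⟨(i : ℕ) - n, by have := i.isLt; omega⟩)

/-- The graph `Γ` of `A`. -/
def graphSet (n d : ℕ) (h : n ≤ d) (A : Euc n → Euc (d - n)) : Set (Euc d) :=
  Set.range (graphMap n d h A)

/-- `H^n` restricted to the graph of `A`. -/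
def graphMeasure (n d : ℕ) (h : n ≤ d) (A : Euc n → Euc (d - n)) : Measure (Euc d) :=
  (μH[(n : ℝ)]).restrict (graphSet n d h A)

/-- The measure `f · H^n_Γ`. -/
def lipGraphMeasure (n d : ℕ) (h : n ≤ d) (A : Euc n → Euc (d - n)) (f : Euc d → ℝ) :
    Measure (Euc d) :=
  (graphMeasure n d h A).withDensity fun y => ENNReal.ofReal (f y)

/-- The smoothly truncated singular integral `T^ν_{φ_ε} f(x) = ∫ φ_ε(x-y) K(x-y) f(y) dν(y)`. -/
def Tphi (n d : ℕ) (h : n ≤ d) (φR : ℝ → ℝ) (K : Euc d → ℝ) (ν : Measure (Euc d))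
    (f : Euc d → ℝ) (ε : ℝ) (x : Euc d) : ℝ :=
  ∫ y, phiE n d h φR ε (x - y) * K (x - y) * f y ∂ν

/-- The `ρ`-variation of a family `G = {G ε}_{ε > 0}`. -/
def varRho (ρ : ℝ) (G : ℝ → ℝ) : ℝ≥0∞ :=
  ⨆ (ε : ℤ → ℝ) (_ : Antitone ε) (_ : ∀ m : ℤ, 0 < ε m),
    (∑' m : ℤ, (ENNReal.ofReal |G (ε (m + 1)) - G (ε m)|) ^ ρ) ^ (1 / ρ)

/-- The oscillation of a family `G = {G ε}_{ε > 0}` with respect to a fixed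
sequence `r`. -/
def oscO (r : ℤ → ℝ) (G : ℝ → ℝ) : ℝ≥0∞ :=
  ⨆ (ε : ℤ → ℝ) (δ : ℤ → ℝ)
    (_ : ∀ m : ℤ, r (m + 1) ≤ ε m ∧ ε m ≤ δ m ∧ δ m ≤ r m),
    (∑' m : ℤ, (ENNReal.ofReal |G (ε m) - G (δ m)|) ^ (2 : ℝ)) ^ (1 / 2 : ℝ)

/-- The `λ`-jump counting function of a family `G = {G ε}_{ε > 0}`. -/
def jumpN (lam : ℝ) (G : ℝ → ℝ) : ℝ≥0∞ :=
  ⨆ (N : ℕ) (_ : ∃ ε δ : ℕ → ℝ,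
      (∀ i, i < N → 0 < ε i) ∧ (∀ i, i < N → ε i < δ i) ∧
      (∀ i, i + 1 < N → δ i ≤ ε (i + 1)) ∧
      (∀ i, i < N → lam < |G (ε i) - G (δ i)|)), (N : ℝ≥0∞)

/-- The `ρ`-variation of a `ℤ`-indexed family. -/
def varRhoZ (ρ : ℝ) (G : ℤ → ℝ) : ℝ≥0∞ :=
  ⨆ (mk : ℤ → ℤ) (_ : Antitone mk),
    (∑' k : ℤ, (ENNReal.ofReal |G (mk (k + 1)) - G (mk k)|) ^ ρ) ^ (1 / ρ)

/-- The oscillation of a `ℤ`-indexed family with respect to a fixed integer sequence `r`. -/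
def oscZ (r : ℤ → ℤ) (G : ℤ → ℝ) : ℝ≥0∞ :=
  ⨆ (ε : ℤ → ℤ) (δ : ℤ → ℤ)
    (_ : ∀ m : ℤ, r (m + 1) ≤ ε m ∧ ε m ≤ δ m ∧ δ m ≤ r m),
    (∑' m : ℤ, (ENNReal.ofReal |G (ε m) - G (δ m)|) ^ (2 : ℝ)) ^ (1 / 2 : ℝ)

/-- A cube `a + [0,b)^n ⊆ ℝⁿ`. -/
def cubeSet (n : ℕ) (a : Euc n) (b : ℝ) : Set (Euc n) :=
  {u | ∀ i : Fin n, a i ≤ u i ∧ u i < a i + b}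

/-- A "vertical" cube `D = D̃ × ℝ^{d-n}`, `D̃` a cube of `ℝⁿ`. -/
def IsVCube (n d : ℕ) (h : n ≤ d) (D : Set (Euc d)) : Prop :=
  ∃ (a : Euc n) (b : ℝ), 0 < b ∧ D = {x : Euc d | projn n d h x ∈ cubeSet n a b}

/-- The half-open v-cube with center `z` (in `ℝⁿ`) and side length `ℓ`. -/
def vQ (n d : ℕ) (h : n ≤ d) (z : Euc n) (ℓ : ℝ) : Set (Euc d) :=
  {x : Euc d | ∀ i : Fin n,
    z i - ℓ / 2 ≤ projn n d h x i ∧ projn n d h x i < z i + ℓ / 2}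

/-- The cylinder `B(z̃_Q, C_Γ ℓ(Q)) × ℝ^{d-n}` associated with the v-cube of center `z`
and side length `ℓ`. -/
def BQ (n d : ℕ) (h : n ≤ d) (CΓ : ℝ) (z : Euc n) (ℓ : ℝ) : Set (Euc d) :=
  {x : Euc d | dist (projn n d h x) z ≤ CΓ * ℓ}

/-- The grid cube `D_m^a = (a + [0, 2^{-m})^n) × ℝ^{d-n}`. -/
def Dgrid (n d : ℕ) (h : n ≤ d) (a : Euc n) (m : ℤ) : Set (Euc d) :=
  {x : Euc d | projn n d h x ∈ cubeSet n a ((2 : ℝ) ^ (-m))}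

/-- The center of the dyadic cube `2^{-m}(k + [0,1)^n)`. -/
def dyadicCenter (n : ℕ) (m : ℤ) (k : Fin n → ℤ) : Euc n :=
  WithLp.toLp 2 (fun i => ((k i : ℝ) + 1 / 2) * (2 : ℝ) ^ (-m))

/-- `∫_{D^c} K(z-y) dν(y)`, understood as `lim_{M→∞} ∫_{D^c ∩ {|z-y|<M}} K(z-y) dν(y)`. -/
def Ktail (d : ℕ) (K : Euc d → ℝ) (ν : Measure (Euc d)) (D : Set (Euc d)) (z : Euc d) : ℝ :=
  limUnder atTop fun M : ℝ => ∫ y in Dᶜ ∩ Metric.ball z M, K (z - y) ∂ν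

/-- `E_D ν = ν(D)⁻¹ ∫_D ∫_{D^c} K(z-y) dν(y) dν(z)`. -/
def cubeAvg (d : ℕ) (K : Euc d → ℝ) (ν : Measure (Euc d)) (D : Set (Euc d)) : ℝ :=
  ((ν D).toReal)⁻¹ * ∫ z in D, Ktail d K ν D z ∂ν

/-- The averaged martingale `E_m ν(x) = 2^{mn} ∫_{{a : x ∈ D_m^a}} E_{D_m^a} ν da`. -/
def Em (n d : ℕ) (h : n ≤ d) (K : Euc d → ℝ) (ν : Measure (Euc d)) (m : ℤ) (x : Euc d) : ℝ :=
  (2 : ℝ) ^ (m * (n : ℤ)) *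
    ∫ a in {a : Euc n | x ∈ Dgrid n d h a m},
      cubeAvg d K ν (Dgrid n d h a m) ∂(volume : Measure (Euc n))

/-- `Λ_m^ν(x,z;y) = 2^{mn} ∫_{{a : x,z ∈ D_m^a, y ∉ D_m^a}} ν(D_m^a)⁻¹ da`. -/
def LambdaM (n d : ℕ) (h : n ≤ d) (ν : Measure (Euc d)) (m : ℤ) (x z y : Euc d) : ℝ :=
  (2 : ℝ) ^ (m * (n : ℤ)) *
    ∫ a in {a : Euc n |
        x ∈ Dgrid n d h a m ∧ z ∈ Dgrid n d h a m ∧ y ∉ Dgrid n d h a m},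
      ((ν (Dgrid n d h a m)).toReal)⁻¹ ∂(volume : Measure (Euc n))

/-- The doubly truncated maximal singular integral
`T_*ν(x) = sup_{0<ε<M} |∫_{ε<|x-y|<M} K(x-y) dν(y)|`. -/
def Tstar (d : ℕ) (K : Euc d → ℝ) (ν : Measure (Euc d)) (x : Euc d) : ℝ≥0∞ :=
  ⨆ (ε : ℝ) (M : ℝ) (_ : 0 < ε) (_ : ε < M),
    ENNReal.ofReal |∫ y in {y : Euc d | ε < dist x y ∧ dist x y < M}, K (x - y) ∂ν|

/-- `(Kφ_ε ∗ ν)(x)`, understood as `lim_{M→∞} ∫_{|x-y|<M} φ_ε(x-y) K(x-y) dν(y)`. -/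
def KphiM (n d : ℕ) (h : n ≤ d) (φR : ℝ → ℝ) (K : Euc d → ℝ) (ν : Measure (Euc d))
    (ε : ℝ) (x : Euc d) : ℝ :=
  limUnder atTop fun M : ℝ =>
    ∫ y in Metric.ball x M, phiE n d h φR ε (x - y) * K (x - y) ∂ν

/-- An (affine) `n`-plane in `ℝ^d`. -/
def IsNPlane (n d : ℕ) (L : Set (Euc d)) : Prop :=
  ∃ (p : Euc d) (φ : Euc n →ₗᵢ[ℝ] Euc d), L = Set.range fun u => p + φ u

/-- The localized Wasserstein-type distance
`dist_F(σ,ν) = sup {|∫ g dσ - ∫ g dν| : Lip(g) ≤ 1, supp g ⊆ F}`. -/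
def wdist (d : ℕ) (F : Set (Euc d)) (σ ν : Measure (Euc d)) : ℝ≥0∞ :=
  ⨆ (g : Euc d → ℝ) (_ : LipschitzWith 1 g) (_ : Function.support g ⊆ F),
    ENNReal.ofReal |(∫ y, g y ∂σ) - ∫ y, g y ∂ν|

/-- The (topological) support of a measure. -/
def msupport (d : ℕ) (μ : Measure (Euc d)) : Set (Euc d) :=
  {x : Euc d | ∀ U : Set (Euc d), IsOpen U → x ∈ U → 0 < μ U}

open Classical in
/-- The coefficient `α_μ(Q)` of the v-cube `Q` with center `z` and side length `ℓ`. -/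
def alphaC (n d : ℕ) (h : n ≤ d) (CΓ : ℝ) (μ : Measure (Euc d)) (z : Euc n) (ℓ : ℝ) :
    ℝ≥0∞ :=
  if vQ n d h z ℓ ∩ msupport d μ = ∅ then 0
  else (ENNReal.ofReal (ℓ ^ (n + 1)))⁻¹ *
    ⨅ (c : ℝ≥0) (L : Set (Euc d)) (_ : IsNPlane n d L),
      wdist d (BQ n d h CΓ z ℓ) μ ((c : ℝ≥0∞) • (μH[(n : ℝ)]).restrict L)

/-- The coefficient `β_{2,μ}(Q)` of the v-cube `Q` with center `z` and side length `ℓ`. -/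
def beta2 (n d : ℕ) (h : n ≤ d) (CΓ : ℝ) (μ : Measure (Euc d)) (z : Euc n) (ℓ : ℝ) :
    ℝ≥0∞ :=
  ⨅ (L : Set (Euc d)) (_ : IsNPlane n d L),
    ((ENNReal.ofReal (ℓ ^ n))⁻¹ *
      ∫⁻ y in vQ n d h z (CΓ * ℓ),
        ENNReal.ofReal ((Metric.infDist y L / ℓ) ^ 2) ∂μ) ^ (1 / 2 : ℝ)

/-- The average `m_Q(g) = μ(Q)⁻¹ ∫_Q g dμ`. -/
def mAvg (d : ℕ) (μ : Measure (Euc d)) (Q : Set (Euc d)) (g : Euc d → ℝ) : ℝ :=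
  ((μ Q).toReal)⁻¹ * ∫ y in Q, g y ∂μ

/-- The Hardy–Littlewood maximal operator over v-cubes. -/
def maxHL (n d : ℕ) (h : n ≤ d) (μ : Measure (Euc d)) (g : Euc d → ℝ) (x : Euc d) : ℝ≥0∞ :=
  ⨆ (Q : Set (Euc d)) (_ : IsVCube n d h Q) (_ : x ∈ Q),
    ENNReal.ofReal (mAvg d μ Q fun y => |g y|)

/-- The sharp maximal operator over v-cubes. -/
def maxSharp (n d : ℕ) (h : n ≤ d) (μ : Measure (Euc d)) (g : Euc d → ℝ) (x : Euc d) :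
    ℝ≥0∞ :=
  ⨆ (Q : Set (Euc d)) (_ : IsVCube n d h Q) (_ : x ∈ Q),
    ENNReal.ofReal (mAvg d μ Q fun y => |g y - mAvg d μ Q g|)

/-- The centered Hardy–Littlewood maximal operator `M^ν`. -/
def maxB (d : ℕ) (ν : Measure (Euc d)) (f : Euc d → ℝ) (x : Euc d) : ℝ≥0∞ :=
  ⨆ (r : ℝ) (_ : 0 < r),
    (ν (Metric.ball x r))⁻¹ * ∫⁻ y in Metric.ball x r, ENNReal.ofReal |f y| ∂ν

namespace RS

variable {n d : ℕ}

lemma projn_sub (h : n ≤ d) (x y : Euc d) :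
    projn n d h (x - y) = projn n d h x - projn n d h y := rfl

lemma euc_norm_sq {k : ℕ} (x : Euc k) : ‖x‖ ^ 2 = ∑ i, ‖x i‖ ^ 2 := by
  rw [EuclideanSpace.norm_eq, Real.sq_sqrt]
  positivity

lemma sum_fin_split (h : n ≤ d) (g : Fin d → ℝ) :
    ∑ i, g i = (∑ i : Fin n, g (Fin.castLE h i)) +
      ∑ j : Fin (d - n), g ⟨n + j, by have := j.isLt; omega⟩ := by
  classical
  set G : ℕ → ℝ := fun i => if hh : i < d then g ⟨i, hh⟩ else 0 with hG
  have h1 : ∑ i, g i = ∑ i ∈ Finset.range d, G i := by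
    rw [← Fin.sum_univ_eq_sum_range G d]
    exact Finset.sum_congr rfl fun i _ => by simp [hG, i.isLt]
  have h2 : (∑ i : Fin n, g (Fin.castLE h i)) = ∑ i ∈ Finset.range n, G i := by
    rw [← Fin.sum_univ_eq_sum_range G n]
    refine Finset.sum_congr rfl fun i _ => ?_
    have hi : (i : ℕ) < d := lt_of_lt_of_le i.isLt h
    simp [hG, hi]
    rfl
  have h3 : (∑ j : Fin (d - n), g ⟨n + j, by have := j.isLt; omega⟩)
      = ∑ i ∈ Finset.Ico n d, G i := by
    rw [Finset.sum_Ico_eq_sum_range, ← Fin.sum_univ_eq_sum_range (fun k => G (n + k)) (d - n)]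
    refine Finset.sum_congr rfl fun j _ => ?_
    have hj : n + (j : ℕ) < d := by have := j.isLt; omega
    simp [hG, hj]
  rw [h1, h2, h3, Finset.sum_range_add_sum_Ico _ h]

lemma norm_sq_split (h : n ≤ d) (w : Euc d) :
    ‖w‖ ^ 2 = ‖projn n d h w‖ ^ 2 +
      ∑ j : Fin (d - n), ‖w ⟨n + j, by have := j.isLt; omega⟩‖ ^ 2 := by
  rw [euc_norm_sq, euc_norm_sq, sum_fin_split h (fun i => ‖w i‖ ^ 2)]
  rfl

lemma norm_projn_le (h : n ≤ d) (x : Euc d) : ‖projn n d h x‖ ≤ ‖x‖ := by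
  rw [← Real.sqrt_sq (norm_nonneg (projn n d h x)), ← Real.sqrt_sq (norm_nonneg x)]
  apply Real.sqrt_le_sqrt
  rw [norm_sq_split h x]
  have : (0:ℝ) ≤ ∑ j : Fin (d - n), ‖x ⟨n + j, by have := j.isLt; omega⟩‖ ^ 2 := by positivity
  linarith

lemma lipschitz_projn (h : n ≤ d) : LipschitzWith 1 (projn n d h) :=
  LipschitzWith.of_dist_le_mul fun x y => by
    rw [dist_eq_norm, dist_eq_norm, ← projn_sub h]
    simpa using norm_projn_le h (x - y)


variable {A : Euc n → Euc (d - n)} {LA : ℝ≥0}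

lemma projn_graphMap (h : n ≤ d) (A : Euc n → Euc (d - n)) (u : Euc n) :
    projn n d h (graphMap n d h A u) = u := by
  ext i
  have hi : ((Fin.castLE h i : Fin d) : ℕ) < n := i.isLt
  show graphMap n d h A u (Fin.castLE h i) = u i
  simp only [graphMap, WithLp.ofLp_toLp, dif_pos hi]
  exact congrArg u (Fin.ext rfl)

lemma graphMap_tail (h : n ≤ d) (A : Euc n → Euc (d - n)) (u : Euc n) (j : Fin (d - n)) :
    graphMap n d h A u ⟨n + j, by have := j.isLt; omega⟩ = A u j := by
  have hnj : ¬ (n + (j : ℕ) < n) := by omega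
  simp only [graphMap, WithLp.ofLp_toLp, dif_neg hnj]
  refine congrArg (A u) ?_
  ext
  simp

lemma norm_graphMap_sub_le (h : n ≤ d) (hA : LipschitzWith LA A) (u v : Euc n) :
    ‖graphMap n d h A u - graphMap n d h A v‖ ≤ (1 + (LA : ℝ)) * ‖u - v‖ := by
  have h0 : (0:ℝ) ≤ (1 + (LA:ℝ)) * ‖u - v‖ := by positivity
  rw [← Real.sqrt_sq (norm_nonneg _), ← Real.sqrt_sq h0]
  apply Real.sqrt_le_sqrt
  rw [norm_sq_split h]
  have hp : projn n d h (graphMap n d h A u - graphMap n d h A v) = u - v := by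
    rw [projn_sub, projn_graphMap, projn_graphMap]
  have ht : (∑ j : Fin (d - n),
      ‖(graphMap n d h A u - graphMap n d h A v) ⟨n + j, by have := j.isLt; omega⟩‖ ^ 2)
      = ‖A u - A v‖ ^ 2 := by
    rw [euc_norm_sq (A u - A v)]
    refine Finset.sum_congr rfl fun j _ => ?_
    have : (graphMap n d h A u - graphMap n d h A v) ⟨n + j, by have := j.isLt; omega⟩
        = (A u - A v) j := by
      show graphMap n d h A u ⟨n + j, _⟩ - graphMap n d h A v ⟨n + j, _⟩ = A u j - A v j
      rw [graphMap_tail, graphMap_tail]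
    rw [this]
  rw [hp, ht]
  have hL : ‖A u - A v‖ ≤ (LA:ℝ) * ‖u - v‖ := by
    have := hA.dist_le_mul u v
    simpa [dist_eq_norm] using this
  nlinarith [norm_nonneg (u - v), norm_nonneg (A u - A v), NNReal.coe_nonneg LA]

lemma lipschitz_graphMap (h : n ≤ d) (hA : LipschitzWith LA A) :
    LipschitzWith (1 + LA) (graphMap n d h A) :=
  LipschitzWith.of_dist_le_mul fun u v => by
    rw [dist_eq_norm, dist_eq_norm]
    have := norm_graphMap_sub_le h hA u v
    simpa using this

lemma graphSet_eq (h : n ≤ d) (A : Euc n → Euc (d - n)) :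
    graphSet n d h A =
      ⋂ j : Fin (d - n), {x : Euc d |
        x ⟨n + j, by have := j.isLt; omega⟩ = A (projn n d h x) j} := by
  ext x
  simp only [graphSet, Set.mem_range, Set.mem_iInter, Set.mem_setOf_eq]
  constructor
  · rintro ⟨u, rfl⟩ j
    rw [projn_graphMap, graphMap_tail]
  · intro hx
    refine ⟨projn n d h x, ?_⟩
    ext i
    by_cases hi : (i : ℕ) < n
    · show graphMap n d h A (projn n d h x) i = x i
      simp only [graphMap, WithLp.ofLp_toLp, dif_pos hi]
      show x (Fin.castLE h ⟨i, hi⟩) = x i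
      exact congrArg x (Fin.ext rfl)
    · show graphMap n d h A (projn n d h x) i = x i
      simp only [graphMap, WithLp.ofLp_toLp, dif_neg hi]
      have hj : (i : ℕ) - n < d - n := by have := i.isLt; omega
      have := (hx ⟨(i : ℕ) - n, hj⟩).symm
      convert this using 2
      ext
      show (i : ℕ) = n + ((i : ℕ) - n)
      omega

lemma isClosed_graphSet (h : n ≤ d) (hA : LipschitzWith LA A) :
    IsClosed (graphSet n d h A) := by
  rw [graphSet_eq]
  refine isClosed_iInter fun j => isClosed_eq ?_ ?_
  · exact (EuclideanSpace.proj (⟨n + j, by have := j.isLt; omega⟩ : Fin d)).continuous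
  · exact (EuclideanSpace.proj j).continuous.comp
      (hA.continuous.comp (lipschitz_projn h).continuous)


lemma pi_to_euc_lipschitz (n : ℕ) :
    LipschitzWith (Real.toNNReal (Real.sqrt n))
      (fun a : Fin n → ℝ => (WithLp.equiv 2 (Fin n → ℝ)).symm a) :=
  LipschitzWith.of_dist_le_mul fun a b => by
    rw [EuclideanSpace.dist_eq]
    have hab : ∀ i, dist ((WithLp.equiv 2 (Fin n → ℝ)).symm a i)
        ((WithLp.equiv 2 (Fin n → ℝ)).symm b i) = dist (a i) (b i) := fun i => rfl
    have h1 : Real.sqrt (∑ i, dist ((WithLp.equiv 2 (Fin n → ℝ)).symm a i)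
        ((WithLp.equiv 2 (Fin n → ℝ)).symm b i) ^ 2) ≤
        Real.sqrt (∑ _i : Fin n, dist a b ^ 2) := by
      apply Real.sqrt_le_sqrt
      refine Finset.sum_le_sum fun i _ => ?_
      rw [hab i]
      have := dist_le_pi_dist a b i
      nlinarith [dist_nonneg (x := a i) (y := b i)]
    refine h1.trans ?_
    rw [Finset.sum_const, Finset.card_univ, Fintype.card_fin, nsmul_eq_mul,
      Real.sqrt_mul (by positivity), Real.sqrt_sq dist_nonneg]
    rw [Real.coe_toNNReal _ (Real.sqrt_nonneg _)]

lemma hausdorff_ball_le (n : ℕ) (u : Euc n) {r : ℝ} (hr : 0 < r) :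
    μH[(n:ℝ)] (Metric.ball u r) ≤ ENNReal.ofReal ((2 * Real.sqrt n * r) ^ n) := by
  set e := fun a : Fin n → ℝ => (WithLp.equiv 2 (Fin n → ℝ)).symm a with he
  have hsurj : Function.Surjective e := fun x => ⟨(WithLp.equiv 2 (Fin n → ℝ)) x, rfl⟩
  have himg : Metric.ball u r = e '' (e ⁻¹' Metric.ball u r) :=
    (Set.image_preimage_eq _ hsurj).symm
  rw [himg]
  have hle := (pi_to_euc_lipschitz n).hausdorffMeasure_image_le
    (by positivity : (0:ℝ) ≤ (n:ℝ)) (e ⁻¹' Metric.ball u r)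
  refine hle.trans ?_
  have hsub : e ⁻¹' Metric.ball u r ⊆ Metric.ball ((WithLp.equiv 2 (Fin n → ℝ)) u) r := by
    intro a ha
    simp only [Set.mem_preimage, Metric.mem_ball] at ha ⊢
    refine lt_of_le_of_lt ?_ ha
    rw [dist_pi_le_iff dist_nonneg]
    intro i
    have h1 : dist (a i) ((WithLp.equiv 2 (Fin n → ℝ)) u i) = dist ((e a) i) (u i) := rfl
    rw [h1, EuclideanSpace.dist_eq]
    rw [Real.le_sqrt dist_nonneg]
    exact Finset.single_le_sum (f := fun i => dist ((e a) i) (u i) ^ 2)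
      (fun i _ => by positivity) (Finset.mem_univ i)
    positivity
  have hmeas : μH[(n:ℝ)] (e ⁻¹' Metric.ball u r) ≤ ENNReal.ofReal ((2 * r) ^ n) := by
    refine (measure_mono hsub).trans ?_
    have hcard : (n : ℝ) = ((Fintype.card (Fin n) : ℕ) : ℝ) := by simp
    rw [hcard, hausdorffMeasure_pi_real, Real.volume_pi_ball _ hr, Fintype.card_fin]
  calc (Real.toNNReal (Real.sqrt n) : ℝ≥0∞) ^ ((n:ℝ)) * μH[(n:ℝ)] (e ⁻¹' Metric.ball u r)
      ≤ (Real.toNNReal (Real.sqrt n) : ℝ≥0∞) ^ ((n:ℝ)) * ENNReal.ofReal ((2 * r) ^ n) :=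
        mul_le_mul' le_rfl hmeas
    _ = ENNReal.ofReal ((2 * Real.sqrt n * r) ^ n) := by
        have hco : ((Real.sqrt n).toNNReal : ℝ≥0∞) = ENNReal.ofReal (Real.sqrt n) := rfl
        rw [ENNReal.rpow_natCast, hco, ← ENNReal.ofReal_pow
          (Real.sqrt_nonneg _), ← ENNReal.ofReal_mul (by positivity)]
        congr 1
        rw [← mul_pow]
        ring

lemma graph_ball_le (h : n ≤ d) {A : Euc n → Euc (d - n)} {LA : ℝ≥0}
    (hA : LipschitzWith LA A) {x : Euc d} (hx : x ∈ graphSet n d h A) {r : ℝ} (hr : 0 < r) :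
    graphMeasure n d h A (Metric.ball x r) ≤
      ENNReal.ofReal ((2 * Real.sqrt n * (1 + (LA:ℝ)) * r) ^ n) := by
  obtain ⟨u₀, rfl⟩ := hx
  rw [graphMeasure, Measure.restrict_apply measurableSet_ball]
  have hsub : Metric.ball (graphMap n d h A u₀) r ∩ graphSet n d h A ⊆
      graphMap n d h A '' Metric.ball u₀ r := by
    rintro y ⟨hy, v, rfl⟩
    refine ⟨v, ?_, rfl⟩
    rw [Metric.mem_ball] at hy ⊢
    calc dist v u₀
        = ‖projn n d h (graphMap n d h A v - graphMap n d h A u₀)‖ := by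
          rw [dist_eq_norm, projn_sub, projn_graphMap, projn_graphMap]
      _ ≤ ‖graphMap n d h A v - graphMap n d h A u₀‖ := norm_projn_le h _
      _ = dist (graphMap n d h A v) (graphMap n d h A u₀) := (dist_eq_norm _ _).symm
      _ < r := hy
  refine (measure_mono hsub).trans ?_
  refine ((lipschitz_graphMap h hA).hausdorffMeasure_image_le
    (by positivity : (0:ℝ) ≤ (n:ℝ)) _).trans ?_
  calc ((1 + LA : ℝ≥0) : ℝ≥0∞) ^ ((n:ℝ)) * μH[(n:ℝ)] (Metric.ball u₀ r)
      ≤ ((1 + LA : ℝ≥0) : ℝ≥0∞) ^ ((n:ℝ)) * ENNReal.ofReal ((2 * Real.sqrt n * r) ^ n) :=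
        mul_le_mul' le_rfl (hausdorff_ball_le n u₀ hr)
    _ = ENNReal.ofReal ((2 * Real.sqrt n * (1 + (LA:ℝ)) * r) ^ n) := by
        rw [ENNReal.rpow_natCast, ← ENNReal.ofReal_coe_nnreal, ← ENNReal.ofReal_pow
          (by positivity), ← ENNReal.ofReal_mul (by positivity)]
        congr 1
        push_cast
        rw [← mul_pow]
        ring


end RS

set_option maxHeartbeats 1000000 in
/-- (Comparison of rough and smooth truncations.) There is `C`,
depending only on `n, d, K, φ_ℝ, Lip(A)`, such that for every `f ∈ L¹(μ)`, `x ∈ Γ` and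
`ε > 0`, `|T^μ_ε f(x) − T^μ_{φ_ε} f(x)| ≤ C M^μ f(x)`; in particular
`|T^μ_ε f(x)| ≤ T^μ_{φ_*} f(x) + C M^μ f(x)`. -/
theorem rough_vs_smooth_truncation
    (n d : ℕ) (hn : 0 < n) (hnd : n < d)
    (CK : ℝ) (K : Euc d → ℝ) (hK : IsCZKernel n d CK K)
    (φR : ℝ → ℝ) (hφ : IsCutoff n φR)
    (LA : ℝ≥0) :
    ∃ C : ℝ, 0 < C ∧
      ∀ (A : Euc n → Euc (d - n)), LipschitzWith LA A →
        ∀ f : Euc d → ℝ, Integrable f (graphMeasure n d hnd.le A) →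
          ∀ x ∈ graphSet n d hnd.le A, ∀ ε : ℝ, 0 < ε →
            (ENNReal.ofReal
                |(∫ y in {y : Euc d | ε < dist x y},
                    K (x - y) * f y ∂(graphMeasure n d hnd.le A)) -
                  Tphi n d hnd.le φR K (graphMeasure n d hnd.le A) f ε x|
              ≤ ENNReal.ofReal C * maxB d (graphMeasure n d hnd.le A) f x) ∧
            (ENNReal.ofReal
                |∫ y in {y : Euc d | ε < dist x y},
                    K (x - y) * f y ∂(graphMeasure n d hnd.le A)|
              ≤ (⨆ (δ : ℝ) (_ : 0 < δ),
                  ENNReal.ofReal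
                    |Tphi n d hnd.le φR K (graphMeasure n d hnd.le A) f δ x|) +
                  ENNReal.ofReal C * maxB d (graphMeasure n d hnd.le A) f x) := by
  classical
  have hsn : (1:ℝ) ≤ Real.sqrt n := Real.one_le_sqrt.mpr (by exact_mod_cast hn)
  have hsn0 : (0:ℝ) < Real.sqrt n := lt_of_lt_of_le one_pos hsn
  have hCK := hK.pos
  refine ⟨CK * (2 * Real.sqrt n * (1 + (LA:ℝ))) ^ n * (3 * Real.sqrt n * (1 + (LA:ℝ))) ^ n,
    by positivity, ?_⟩
  set C : ℝ := CK * (2 * Real.sqrt n * (1 + (LA:ℝ))) ^ n * (3 * Real.sqrt n * (1 + (LA:ℝ))) ^ n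
    with hC
  intro A hA f hf x hx ε hε
  set ν := graphMeasure n d hnd.le A with hν
  obtain ⟨u₀, hu₀⟩ := hx
  set r : ℝ := 3 * Real.sqrt n * (1 + (LA:ℝ)) * ε with hr
  have hrpos : 0 < r := by positivity
  -- measurability of the kernel
  have hKcont : ContinuousOn K ({(0 : Euc d)}ᶜ) := fun z hz =>
    ((hK.diff z hz).continuousAt).continuousWithinAt
  have hKm : Measurable K := measurable_of_continuousOn_compl_singleton 0 hKcont
  have meas_K : Measurable fun y : Euc d => K (x - y) :=
    hKm.comp (measurable_const.sub measurable_id)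
  have meas_phi : Measurable fun y : Euc d => phiE n d hnd.le φR ε (x - y) := by
    have c1 : Continuous fun y : Euc d => ‖projn n d hnd.le (x - y)‖ / ε :=
      (((RS.lipschitz_projn hnd.le).continuous.comp
        (continuous_const.sub continuous_id)).norm).div_const ε
    exact (hφ.smooth.continuous.comp c1).measurable
  set S : Set (Euc d) := {y : Euc d | ε < dist x y} with hSdef
  have hSmem : ∀ y : Euc d, y ∈ S ↔ ε < dist x y := fun y => Iff.rfl
  have hS : MeasurableSet S := by
    have : IsOpen S := isOpen_lt continuous_const (continuous_const.dist continuous_id)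
    exact this.measurableSet
  -- pointwise kernel bounds
  have bK : ∀ y ∈ S, |K (x - y)| ≤ CK / ε ^ n := by
    intro y hy
    have hd2 : ε < ‖x - y‖ := by rw [← dist_eq_norm]; exact (hSmem y).mp hy
    have hne : x - y ≠ 0 := by
      intro h0; rw [h0, norm_zero] at hd2; linarith
    refine (hK.bound _ hne).trans ?_
    have hp : (0:ℝ) < ‖x - y‖ := hε.trans hd2
    rw [div_le_div_iff₀ (by positivity) (by positivity)]
    have h2 : ε ^ n ≤ ‖x - y‖ ^ n := pow_le_pow_left₀ hε.le hd2.le n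
    nlinarith
  have bφ : ∀ z : Euc d, |phiE n d hnd.le φR ε z * K z| ≤ CK / ε ^ n := by
    intro z
    by_cases hz : φR (‖projn n d hnd.le z‖ / ε) = 0
    · rw [phiE, hz, zero_mul, abs_zero]; positivity
    · have h21 : 2.1 * Real.sqrt n ≤ ‖projn n d hnd.le z‖ / ε :=
        not_lt.mp (fun hlt => hz (hφ.eq_zero _ hlt))
      have h21' : 2.1 * Real.sqrt n * ε ≤ ‖projn n d hnd.le z‖ := by
        rw [← le_div_iff₀ hε]; exact h21
      have hnorm : ε ≤ ‖projn n d hnd.le z‖ := by nlinarith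
      have hz2 : ε ≤ ‖z‖ := hnorm.trans (RS.norm_projn_le hnd.le z)
      have hne : z ≠ 0 := by
        intro h0; rw [h0, norm_zero] at hz2; linarith
      rw [phiE, abs_mul]
      have hφb : |φR (‖projn n d hnd.le z‖ / ε)| ≤ 1 := by
        rw [abs_of_nonneg (hφ.nonneg _)]; exact hφ.le_one _
      calc |φR (‖projn n d hnd.le z‖ / ε)| * |K z| ≤ 1 * |K z| :=
            mul_le_mul_of_nonneg_right hφb (abs_nonneg _)
        _ = |K z| := one_mul _
        _ ≤ CK / ‖z‖ ^ n := hK.bound z hne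
        _ ≤ CK / ε ^ n := by
            have hp : (0:ℝ) < ‖z‖ := hε.trans_le hz2
            rw [div_le_div_iff₀ (by positivity) (by positivity)]
            have h2 : ε ^ n ≤ ‖z‖ ^ n := pow_le_pow_left₀ hε.le hz2 n
            nlinarith
  -- integrability
  have habs : Integrable (fun y => CK / ε ^ n * |f y|) ν := (hf.abs).const_mul _
  have int2 : Integrable (fun y => phiE n d hnd.le φR ε (x - y) * K (x - y) * f y) ν := by
    refine Integrable.mono' habs (((meas_phi.mul meas_K).aestronglyMeasurable).mul hf.1) ?_
    refine ae_of_all _ fun y => ?_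
    rw [Real.norm_eq_abs, abs_mul]
    exact mul_le_mul_of_nonneg_right (bφ (x - y)) (abs_nonneg _)
  have int1 : Integrable (S.indicator fun y => K (x - y) * f y) ν := by
    refine Integrable.mono' habs ((meas_K.aestronglyMeasurable.mul hf.1).indicator hS) ?_
    refine ae_of_all _ fun y => ?_
    rw [Real.norm_eq_abs]
    by_cases hy : y ∈ S
    · rw [Set.indicator_of_mem hy, abs_mul]
      exact mul_le_mul_of_nonneg_right (bK y hy) (abs_nonneg _)
    · rw [Set.indicator_of_notMem hy, abs_zero]; positivity
  have hset : (∫ y in S, K (x - y) * f y ∂ν)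
      = ∫ y, S.indicator (fun y => K (x - y) * f y) y ∂ν := (integral_indicator hS).symm
  set g : Euc d → ℝ := fun y => S.indicator (fun y => K (x - y) * f y) y -
      phiE n d hnd.le φR ε (x - y) * K (x - y) * f y with hgdef
  have hdiffint : (∫ y in S, K (x - y) * f y ∂ν) -
      Tphi n d hnd.le φR K ν f ε x = ∫ y, g y ∂ν := by
    rw [hset, Tphi, ← integral_sub int1 int2]
  have intg : Integrable g ν := int1.sub int2
  -- a.e. pointwise bound on the difference
  have hΓ : MeasurableSet (graphSet n d hnd.le A) :=
    (RS.isClosed_graphSet hnd.le hA).measurableSet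
  have hνae : ∀ᵐ y ∂ν, y ∈ graphSet n d hnd.le A := ae_restrict_mem hΓ
  have key_ae : ∀ᵐ y ∂ν, ENNReal.ofReal |g y| ≤
      (Metric.ball x r).indicator (fun y => ENNReal.ofReal (CK / ε ^ n * |f y|)) y := by
    filter_upwards [hνae] with y hyΓ
    obtain ⟨v, hv⟩ := hyΓ
    have main : |g y| ≤ (Metric.ball x r).indicator (fun y => CK / ε ^ n * |f y|) y := by
      have hind0 : (0:ℝ) ≤ (Metric.ball x r).indicator (fun y => CK / ε ^ n * |f y|) y :=
        Set.indicator_nonneg (fun y _ => by positivity) _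
      rcases le_or_gt (dist x y) ε with hcd | hcd
      · -- both terms vanish
        have hyS : y ∉ S := fun hyS => absurd ((hSmem y).mp hyS) (not_lt.mpr hcd)
        have hphi0 : phiE n d hnd.le φR ε (x - y) = 0 := by
          rw [phiE]
          apply hφ.eq_zero
          have h1 : ‖projn n d hnd.le (x - y)‖ ≤ ε :=
            (RS.norm_projn_le _ _).trans (by rw [← dist_eq_norm]; exact hcd)
          have h2 : ‖projn n d hnd.le (x - y)‖ / ε ≤ 1 := by
            rw [div_le_one hε]; exact h1
          nlinarith
        have hg0 : g y = 0 := by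
          simp only [hgdef, Set.indicator_of_notMem hyS, hphi0, zero_mul, sub_zero]
        rw [hg0, abs_zero]; exact hind0
      · have hyS : y ∈ S := (hSmem y).mpr hcd
        by_cases hb : 3 * Real.sqrt n ≤ ‖projn n d hnd.le (x - y)‖ / ε
        · have hphi1 : phiE n d hnd.le φR ε (x - y) = 1 := by
            rw [phiE]; exact hφ.eq_one _ hb
          have hg0 : g y = 0 := by
            simp only [hgdef, Set.indicator_of_mem hyS, hphi1, one_mul, sub_self]
          rw [hg0, abs_zero]; exact hind0
        · push_neg at hb
          have hsmall : ‖projn n d hnd.le (x - y)‖ < 3 * Real.sqrt n * ε := by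
            rw [div_lt_iff₀ hε] at hb; linarith
          have hproj : projn n d hnd.le (x - y) = u₀ - v := by
            rw [RS.projn_sub, ← hu₀, ← hv, RS.projn_graphMap, RS.projn_graphMap]
          have hxy : ‖x - y‖ ≤ (1 + (LA:ℝ)) * ‖projn n d hnd.le (x - y)‖ := by
            calc ‖x - y‖ = ‖graphMap n d hnd.le A u₀ - graphMap n d hnd.le A v‖ := by
                  rw [hu₀, hv]
              _ ≤ (1 + (LA:ℝ)) * ‖u₀ - v‖ := RS.norm_graphMap_sub_le hnd.le hA u₀ v
              _ = (1 + (LA:ℝ)) * ‖projn n d hnd.le (x - y)‖ := by rw [hproj]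
          have hyball : y ∈ Metric.ball x r := by
            rw [Metric.mem_ball, dist_comm, dist_eq_norm]
            calc ‖x - y‖ ≤ (1 + (LA:ℝ)) * ‖projn n d hnd.le (x - y)‖ := hxy
              _ < (1 + (LA:ℝ)) * (3 * Real.sqrt n * ε) := by
                  apply mul_lt_mul_of_pos_left hsmall (by positivity)
              _ = r := by rw [hr]; ring
          rw [Set.indicator_of_mem hyball]
          have hfact : g y =
              (1 - phiE n d hnd.le φR ε (x - y)) * (K (x - y) * f y) := by
            simp only [hgdef, Set.indicator_of_mem hyS]; ring
          rw [hfact, abs_mul, abs_mul]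
          have h01 : 0 ≤ phiE n d hnd.le φR ε (x - y) := hφ.nonneg _
          have h02 : phiE n d hnd.le φR ε (x - y) ≤ 1 := hφ.le_one _
          have h1 : |1 - phiE n d hnd.le φR ε (x - y)| ≤ 1 := by
            rw [abs_le]; constructor <;> nlinarith
          calc |1 - phiE n d hnd.le φR ε (x - y)| * (|K (x - y)| * |f y|)
              ≤ 1 * (|K (x - y)| * |f y|) :=
                mul_le_mul_of_nonneg_right h1 (by positivity)
            _ = |K (x - y)| * |f y| := one_mul _
            _ ≤ (CK / ε ^ n) * |f y| :=
                mul_le_mul_of_nonneg_right (bK y hyS) (abs_nonneg _)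
    by_cases hy : y ∈ Metric.ball x r
    · rw [Set.indicator_of_mem hy]
      rw [Set.indicator_of_mem hy] at main
      exact ENNReal.ofReal_le_ofReal main
    · rw [Set.indicator_of_notMem hy]
      rw [Set.indicator_of_notMem hy] at main
      have : |g y| = 0 := le_antisymm main (abs_nonneg _)
      simp [this]
  -- measure of the ball and the maximal function
  have hνball : ν (Metric.ball x r) ≤
      ENNReal.ofReal ((2 * Real.sqrt n * (1 + (LA:ℝ)) * r) ^ n) :=
    RS.graph_ball_le hnd.le hA ⟨u₀, hu₀⟩ hrpos
  have hνball_ne : ν (Metric.ball x r) ≠ ⊤ := (hνball.trans_lt ENNReal.ofReal_lt_top).ne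
  have hmaxle : (∫⁻ y in Metric.ball x r, ENNReal.ofReal |f y| ∂ν) ≤
      ν (Metric.ball x r) * maxB d ν f x := by
    by_cases h0 : ν (Metric.ball x r) = 0
    · rw [setLIntegral_measure_zero _ _ h0]; exact zero_le
    · have hM : (ν (Metric.ball x r))⁻¹ * ∫⁻ y in Metric.ball x r, ENNReal.ofReal |f y| ∂ν
          ≤ maxB d ν f x := by
        rw [maxB]
        exact le_iSup₂ (f := fun (r' : ℝ) (_ : 0 < r') =>
          (ν (Metric.ball x r'))⁻¹ * ∫⁻ y in Metric.ball x r', ENNReal.ofReal |f y| ∂ν) r hrpos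
      calc (∫⁻ y in Metric.ball x r, ENNReal.ofReal |f y| ∂ν)
          = ν (Metric.ball x r) * ((ν (Metric.ball x r))⁻¹ *
            ∫⁻ y in Metric.ball x r, ENNReal.ofReal |f y| ∂ν) := by
            rw [← mul_assoc, ENNReal.mul_inv_cancel h0 hνball_ne, one_mul]
        _ ≤ ν (Metric.ball x r) * maxB d ν f x := mul_le_mul' le_rfl hM
  -- the main estimate
  have main1 : ENNReal.ofReal
      |(∫ y in S, K (x - y) * f y ∂ν) - Tphi n d hnd.le φR K ν f ε x|
      ≤ ENNReal.ofReal C * maxB d ν f x := by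
    rw [hdiffint]
    calc ENNReal.ofReal |∫ y, g y ∂ν|
        ≤ ENNReal.ofReal (∫ y, |g y| ∂ν) := ENNReal.ofReal_le_ofReal (by
            simpa [Real.norm_eq_abs] using norm_integral_le_integral_norm (μ := ν) g)
      _ = ∫⁻ y, ENNReal.ofReal |g y| ∂ν :=
            ofReal_integral_eq_lintegral_ofReal intg.abs (ae_of_all _ fun y => abs_nonneg _)
      _ ≤ ∫⁻ y, (Metric.ball x r).indicator
            (fun y => ENNReal.ofReal (CK / ε ^ n * |f y|)) y ∂ν := lintegral_mono_ae key_ae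
      _ = ∫⁻ y in Metric.ball x r, ENNReal.ofReal (CK / ε ^ n * |f y|) ∂ν :=
            lintegral_indicator measurableSet_ball _
      _ = ∫⁻ y in Metric.ball x r,
            ENNReal.ofReal (CK / ε ^ n) * ENNReal.ofReal |f y| ∂ν :=
            lintegral_congr fun y => by rw [ENNReal.ofReal_mul (by positivity)]
      _ = ENNReal.ofReal (CK / ε ^ n) * ∫⁻ y in Metric.ball x r, ENNReal.ofReal |f y| ∂ν :=
            lintegral_const_mul' _ _ ENNReal.ofReal_ne_top
      _ ≤ ENNReal.ofReal (CK / ε ^ n) * (ν (Metric.ball x r) * maxB d ν f x) :=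
            mul_le_mul' le_rfl hmaxle
      _ ≤ ENNReal.ofReal (CK / ε ^ n) *
            (ENNReal.ofReal ((2 * Real.sqrt n * (1 + (LA:ℝ)) * r) ^ n) * maxB d ν f x) :=
            mul_le_mul' le_rfl (mul_le_mul' hνball le_rfl)
      _ = ENNReal.ofReal C * maxB d ν f x := by
            rw [← mul_assoc, ← ENNReal.ofReal_mul (by positivity)]
            congr 1
            rw [hC, hr]
            have h1 : 2 * Real.sqrt n * (1 + (LA:ℝ)) * (3 * Real.sqrt n * (1 + (LA:ℝ)) * ε)
                = (2 * Real.sqrt n * (1 + (LA:ℝ))) * (3 * Real.sqrt n * (1 + (LA:ℝ))) * ε := by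
              ring
            rw [h1, mul_pow, mul_pow]
            have hεn : (ε:ℝ) ^ n ≠ 0 := by positivity
            field_simp
  refine ⟨main1, ?_⟩
  have habs2 : |∫ y in S, K (x - y) * f y ∂ν| ≤
      |Tphi n d hnd.le φR K ν f ε x| +
      |(∫ y in S, K (x - y) * f y ∂ν) - Tphi n d hnd.le φR K ν f ε x| := by
    have := abs_add_le (Tphi n d hnd.le φR K ν f ε x)
      ((∫ y in S, K (x - y) * f y ∂ν) - Tphi n d hnd.le φR K ν f ε x)
    simpa using this
  have hsup : ENNReal.ofReal |Tphi n d hnd.le φR K ν f ε x| ≤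
      ⨆ (δ : ℝ) (_ : 0 < δ), ENNReal.ofReal |Tphi n d hnd.le φR K ν f δ x| :=
    le_iSup₂ (f := fun (δ : ℝ) (_ : 0 < δ) =>
      ENNReal.ofReal |Tphi n d hnd.le φR K ν f δ x|) ε hε
  calc ENNReal.ofReal |∫ y in S, K (x - y) * f y ∂ν|
      ≤ ENNReal.ofReal (|Tphi n d hnd.le φR K ν f ε x| +
          |(∫ y in S, K (x - y) * f y ∂ν) - Tphi n d hnd.le φR K ν f ε x|) :=
        ENNReal.ofReal_le_ofReal habs2
    _ = ENNReal.ofReal |Tphi n d hnd.le φR K ν f ε x| +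
        ENNReal.ofReal |(∫ y in S, K (x - y) * f y ∂ν) - Tphi n d hnd.le φR K ν f ε x| :=
        ENNReal.ofReal_add (abs_nonneg _) (abs_nonneg _)
    _ ≤ (⨆ (δ : ℝ) (_ : 0 < δ), ENNReal.ofReal |Tphi n d hnd.le φR K ν f δ x|) +
        ENNReal.ofReal C * maxB d ν f x := add_le_add hsup main1
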